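/- For any partition μ and any positive integer n ≥ ℓ(μ), the number of content tabloids of shape μ with entries bounded by n equals Π_{u ∈ μ} (n + c(u)), the product over all cells u of μ of n plus the content of u. -/

import Mathlib

/-- For any partition μ and any positive integer n ≥ ℓ(μ) (the number of
nonzero parts, i.e. `μ.colLen 0`), the number of content tabloids of shape μ with
entries bounded by n equals Π_{u ∈ μ} (n + c(u)). -/
theorem card_contentTabloids (μ : YoungDiagram) (n : ℕ) (hn : 0 < n)
    (hlen : μ.colLen 0 ≤ n) :
    Nat.card {T : ↥μ.cells → ℤ //
        ∀ u : ↥μ.cells, 1 - ((u.1.2 : ℤ) - (u.1.1 : ℤ)) ≤ T u ∧ T u ≤ (n : ℤ)} =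
      (∏ u ∈ μ.cells, ((n : ℤ) + ((u.2 : ℤ) - (u.1 : ℤ)))).toNat := by
  -- each factor is nonnegative
  have hpos : ∀ u ∈ μ.cells, (0 : ℤ) ≤ (n : ℤ) + ((u.2 : ℤ) - (u.1 : ℤ)) := by
    intro u hu
    have h1 : u.1 < μ.colLen u.2 := by
      rw [← YoungDiagram.mem_iff_lt_colLen]
      simpa [YoungDiagram.mem_cells] using hu
    have h2 : μ.colLen u.2 ≤ μ.colLen 0 := μ.colLen_anti 0 u.2 (Nat.zero_le _)
    have : u.1 < n := lt_of_lt_of_le h1 (h2.trans hlen)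
    have : (u.1 : ℤ) < (n : ℤ) := by exact_mod_cast this
    have : (0 : ℤ) ≤ (u.2 : ℤ) := Int.natCast_nonneg _
    omega
  -- equivalence with a Pi type of intervals
  have e : {T : ↥μ.cells → ℤ //
        ∀ u : ↥μ.cells, 1 - ((u.1.2 : ℤ) - (u.1.1 : ℤ)) ≤ T u ∧ T u ≤ (n : ℤ)} ≃
      ∀ u : ↥μ.cells, (Finset.Icc (1 - ((u.1.2 : ℤ) - (u.1.1 : ℤ))) (n : ℤ)) :=
    { toFun := fun T u => ⟨T.1 u, by
        rw [Finset.mem_Icc]; exact T.2 u⟩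
      invFun := fun f => ⟨fun u => (f u).1, fun u => by
        have := (f u).2; rw [Finset.mem_Icc] at this; exact this⟩
      left_inv := fun T => rfl
      right_inv := fun f => rfl }
  rw [Nat.card_congr e, Nat.card_pi]
  have hcard : ∀ u : ↥μ.cells,
      Nat.card (Finset.Icc (1 - ((u.1.2 : ℤ) - (u.1.1 : ℤ))) (n : ℤ)) =
        ((n : ℤ) + ((u.1.2 : ℤ) - (u.1.1 : ℤ))).toNat := by
    intro u
    rw [Nat.card_eq_fintype_card, Fintype.card_coe, Int.card_Icc]
    congr 1
    ring
  calc ∏ u : ↥μ.cells, Nat.card (Finset.Icc (1 - ((u.1.2 : ℤ) - (u.1.1 : ℤ))) (n : ℤ))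
      = ∏ u : ↥μ.cells, ((n : ℤ) + ((u.1.2 : ℤ) - (u.1.1 : ℤ))).toNat := by
        exact Finset.prod_congr rfl fun u _ => hcard u
    _ = ∏ u ∈ μ.cells, ((n : ℤ) + ((u.2 : ℤ) - (u.1 : ℤ))).toNat := by
        exact Finset.prod_attach μ.cells fun u => ((n : ℤ) + ((u.2 : ℤ) - (u.1 : ℤ))).toNat
    _ = (∏ u ∈ μ.cells, ((n : ℤ) + ((u.2 : ℤ) - (u.1 : ℤ)))).toNat := by
        have h : ((∏ u ∈ μ.cells, ((n : ℤ) + ((u.2 : ℤ) - (u.1 : ℤ))).toNat : ℕ) : ℤ) =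
            ∏ u ∈ μ.cells, ((n : ℤ) + ((u.2 : ℤ) - (u.1 : ℤ))) := by
          push_cast
          exact Finset.prod_congr rfl fun u hu => Int.toNat_of_nonneg (hpos u hu)
        rw [← h, Int.toNat_natCast]
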